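/- arXiv:2605.29175 — 4 statements merged into one kernel-verified Lean document; each statement's English description precedes it below -/
import Mathlib

section
/- Let $(X,\mathcal{A},\mu)$ be a measure space with $\mu(X)<\infty$ and let $\alpha>1$. Then there exists a constant $C>0$, depending only on $\alpha$ and $\mu(X)$, such that the following holds: for every $\mu$-integrable function $f:X\to\mathbb{R}$ and every $\beta>0$, if for all $k>0$ one has $\int_X (|f|-k)^+\,d\mu \le \beta\,\mu(\{x : |f(x)|>k\})^{\alpha}$, then $f\in L^{\infty}(\mu)$ and $\|f\|_{L^\infty(\mu)}\le C\beta$. -/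
open MeasureTheory ENNReal

/-- Stampacchia-type boundedness lemma: if the tails `∫ (|f|-k)⁺` are controlled by
`β · μ{|f|>k}^α` with `α > 1`, then `f ∈ L^∞` with `‖f‖_∞ ≤ C β`, where `C` depends
only on `α` and the total mass `μ(X)`. -/
theorem stmt0 (α : ℝ) (hα : 1 < α) (m : ℝ≥0∞) (hm : m < ⊤) :
    ∃ C : ℝ, 0 < C ∧
      ∀ (X : Type) (_ : MeasurableSpace X) (μ : Measure X), μ Set.univ = m →
        ∀ f : X → ℝ, Integrable f μ →
          ∀ β : ℝ, 0 < β →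
            (∀ k : ℝ, 0 < k →
              (∫ x, max (|f x| - k) 0 ∂μ) ≤ β * (μ {x | k < |f x|}).toReal ^ α) →
            MemLp f ⊤ μ ∧ eLpNorm f ⊤ μ ≤ ENNReal.ofReal (C * β) := by
  have hα1 : (0:ℝ) < α - 1 := by linarith
  set M : ℝ := m.toReal with hMdef
  have hM0 : 0 ≤ M := ENNReal.toReal_nonneg
  set r : ℝ := (2:ℝ) ^ (-(α-1)⁻¹) with hrdef
  have hr0 : 0 < r := Real.rpow_pos_of_pos two_pos _
  have hr1 : r < 1 := Real.rpow_lt_one_of_one_lt_of_neg one_lt_two (by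
    simp only [neg_neg, Left.neg_neg_iff]; positivity)
  have hMα1 : 0 ≤ M ^ (α - 1) := Real.rpow_nonneg hM0 _
  refine ⟨4 * (M ^ (α-1) + 1) / r, by positivity, ?_⟩
  set C : ℝ := 4 * (M ^ (α-1) + 1) / r with hCdef
  have hC0 : 0 < C := by positivity
  intro X _ μ hμm f hf β hβ hyp
  -- finiteness
  have hfin : ∀ s : Set X, μ s ≠ ⊤ :=
    fun s => ((measure_mono (Set.subset_univ s)).trans_lt (hμm ▸ hm)).ne
  set φ : ℝ → ℝ := fun t => (μ {x | t < |f x|}).toReal with hφdef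
  have hφ0 : ∀ t, 0 ≤ φ t := fun t => ENNReal.toReal_nonneg
  have hφM : ∀ t, φ t ≤ M := by
    intro t
    have h1 : μ {x | t < |f x|} ≤ μ Set.univ := measure_mono (Set.subset_univ _)
    rw [hμm] at h1
    exact ENNReal.toReal_mono hm.ne h1
  have hφmono : ∀ s t : ℝ, s ≤ t → φ t ≤ φ s := by
    intro s t hst
    refine ENNReal.toReal_mono (hfin _) (measure_mono ?_)
    intro x hx; exact lt_of_le_of_lt hst hx
  -- key Markov estimate
  have key : ∀ k h : ℝ, 0 < k → k < h →
      (h - k) * φ h ≤ β * (φ k) ^ α := by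
    intro k h hk hkh
    set g : X → ℝ := fun x => max (|f x| - k) 0 with hgdef
    have hgm : AEStronglyMeasurable g μ :=
      (((hf.aemeasurable.norm.sub aemeasurable_const).max
        aemeasurable_const).aestronglyMeasurable)
    have hgi : Integrable g μ := by
      refine hf.abs.mono hgm (ae_of_all _ fun x => ?_)
      have h1 : (0:ℝ) ≤ g x := le_max_right _ _
      rw [Real.norm_eq_abs, Real.norm_eq_abs, abs_of_nonneg h1, abs_abs]
      exact max_le (by linarith [hk.le, abs_nonneg (f x)] : |f x| - k ≤ |f x|)
        (abs_nonneg _)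
    have hsub : {x | h < |f x|} ⊆ {x | h - k ≤ g x} := by
      intro x hx
      have : h - k ≤ |f x| - k := by simp only [Set.mem_setOf_eq] at hx; linarith
      exact this.trans (le_max_left _ _)
    have hμle : (μ {x | h < |f x|}).toReal ≤ (μ {x | h - k ≤ g x}).toReal :=
      ENNReal.toReal_mono (hfin _) (measure_mono hsub)
    calc (h - k) * φ h ≤ (h - k) * (μ {x | h - k ≤ g x}).toReal :=
          mul_le_mul_of_nonneg_left hμle (by linarith)
      _ ≤ ∫ x, g x ∂μ :=
          mul_meas_ge_le_integral_of_nonneg (ae_of_all _ fun x => le_max_right _ _) hgi _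
      _ ≤ β * (φ k) ^ α := hyp k hk
  set δ : ℝ := C * β with hδdef
  have hδ0 : 0 < δ := mul_pos hC0 hβ
  set k : ℕ → ℝ := fun j => δ * (1 - (2:ℝ)⁻¹ ^ (j+1)) with hkdef
  have hhalf : ∀ j : ℕ, (0:ℝ) < (2:ℝ)⁻¹ ^ j := fun j => by positivity
  have hhalf1 : ∀ j : ℕ, (2:ℝ)⁻¹ ^ (j+1) < 1 := fun j =>
    pow_lt_one₀ (by norm_num) (by norm_num) (Nat.succ_ne_zero j)
  have hkpos : ∀ j, 0 < k j := fun j =>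
    mul_pos hδ0 (by linarith [hhalf1 j])
  have hklt : ∀ j, k j < δ := by
    intro j
    have h1 := hhalf (j+1)
    simp only [hkdef]
    nlinarith [hδ0]
  have hkstep : ∀ j : ℕ, k (j+1) - k j = δ * (2:ℝ)⁻¹ ^ (j+2) := by
    intro j
    simp only [hkdef, pow_succ]
    ring
  have hkmono : ∀ j : ℕ, k j < k (j+1) := by
    intro j
    have h1 := hkstep j
    have h2 := hhalf (j+2)
    nlinarith [hδ0]
  -- rpow identity
  have hrj : ∀ j : ℕ, (r ^ j) ^ α = (2:ℝ)⁻¹ ^ j * r ^ j := by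
    intro j
    have e1 : r ^ j = (2:ℝ) ^ (-(α-1)⁻¹ * (j:ℝ)) := by
      rw [hrdef, ← Real.rpow_natCast ((2:ℝ) ^ (-(α-1)⁻¹)) j,
        ← Real.rpow_mul (by norm_num)]
    have e2 : (2:ℝ)⁻¹ ^ j = (2:ℝ) ^ (-(j:ℝ)) := by
      rw [Real.rpow_neg (by norm_num), Real.rpow_natCast]
      exact inv_pow 2 j
    rw [e1, e2, ← Real.rpow_mul (by norm_num : (0:ℝ) ≤ 2),
      ← Real.rpow_add two_pos]
    congr 1
    have hne : α - 1 ≠ 0 := ne_of_gt hα1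
    field_simp
    ring
  -- M^α bound
  have hMα : M ^ α ≤ M ^ (α - 1) * M + M := by
    rcases eq_or_lt_of_le hM0 with h0 | h0
    · rw [← h0, Real.zero_rpow (by linarith : α ≠ 0)]
      simp
    · have : M ^ α = M ^ (α - 1) * M := by
        rw [← Real.rpow_add_one h0.ne' (α - 1)]
        ring_nf
      linarith
  -- main induction
  have ind : ∀ j : ℕ, φ (k j) ≤ M * r ^ j := by
    intro j
    induction j with
    | zero => simpa using hφM (k 0)
    | succ j ih =>
      have hk1 := key (k j) (k (j+1)) (hkpos j) (hkmono j)
      have hrpow : (φ (k j)) ^ α ≤ (M * r ^ j) ^ α :=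
        Real.rpow_le_rpow (hφ0 _) ih (by linarith)
      have hmul : (M * r ^ j) ^ α = M ^ α * ((2:ℝ)⁻¹ ^ j * r ^ j) := by
        rw [Real.mul_rpow hM0 (pow_nonneg hr0.le j), hrj j]
      have harith : β * (M ^ α * ((2:ℝ)⁻¹ ^ j * r ^ j)) ≤
          M * r ^ (j+1) * (δ * (2:ℝ)⁻¹ ^ (j+2)) := by
        have hre : M * r ^ (j+1) * (δ * (2:ℝ)⁻¹ ^ (j+2)) =
            (M ^ (α-1) * M + M) * β * ((2:ℝ)⁻¹ ^ j * r ^ j) := by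
          rw [hδdef, hCdef]
          field_simp
          ring
        rw [hre]
        calc β * (M ^ α * ((2:ℝ)⁻¹ ^ j * r ^ j))
            = M ^ α * (β * ((2:ℝ)⁻¹ ^ j * r ^ j)) := by ring
          _ ≤ (M ^ (α-1) * M + M) * (β * ((2:ℝ)⁻¹ ^ j * r ^ j)) :=
              mul_le_mul_of_nonneg_right hMα (by positivity)
          _ = (M ^ (α-1) * M + M) * β * ((2:ℝ)⁻¹ ^ j * r ^ j) := by ring
      have hchain : (k (j+1) - k j) * φ (k (j+1)) ≤
          (δ * (2:ℝ)⁻¹ ^ (j+2)) * (M * r ^ (j+1)) := by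
        calc (k (j+1) - k j) * φ (k (j+1)) ≤ β * (φ (k j)) ^ α := hk1
          _ ≤ β * (M * r ^ j) ^ α := mul_le_mul_of_nonneg_left hrpow hβ.le
          _ = β * (M ^ α * ((2:ℝ)⁻¹ ^ j * r ^ j)) := by rw [hmul]
          _ ≤ M * r ^ (j+1) * (δ * (2:ℝ)⁻¹ ^ (j+2)) := harith
          _ = (δ * (2:ℝ)⁻¹ ^ (j+2)) * (M * r ^ (j+1)) := by ring
      rw [hkstep j] at hchain
      exact le_of_mul_le_mul_left hchain (by positivity)
  -- take the limit
  have htend : Filter.Tendsto (fun j : ℕ => M * r ^ j) Filter.atTop (nhds 0) := by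
    have := (tendsto_pow_atTop_nhds_zero_of_lt_one hr0.le hr1).const_mul M
    simpa using this
  have hφδ : φ δ ≤ 0 :=
    ge_of_tendsto' htend (fun j => le_trans (hφmono (k j) δ (hklt j).le) (ind j))
  have hφδ0 : φ δ = 0 := le_antisymm hφδ (hφ0 δ)
  have hnull : μ {x | δ < |f x|} = 0 := by
    rcases (ENNReal.toReal_eq_zero_iff _).mp hφδ0 with h | h
    · exact h
    · exact absurd h (hfin _)
  have hb : ∀ᵐ x ∂μ, ‖f x‖ ≤ δ := by
    rw [ae_iff]
    simpa [Real.norm_eq_abs, not_le] using hnull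
  refine ⟨memLp_top_of_bound hf.aestronglyMeasurable δ hb, ?_⟩
  have := eLpNorm_le_of_ae_bound (p := ⊤) (μ := μ) hb
  simpa using this
end

section
/- Let $N\ge 2$ be an integer. For $1<p<N$ let $S_{N,p}=\pi^{-1/2}N^{-1/p}\left(\frac{p-1}{N-p}\right)^{1-1/p}\left(\frac{\Gamma(1+N/2)\,\Gamma(N)}{\Gamma(N/p)\,\Gamma(1+N-N/p)}\right)^{1/N}$. Then $\lim_{p\to 1^+} S_{N,p}^{\,1/(p-1)} = 0$. In particular there exists $p_0>1$ such that $S_{N,p}<1$ and $S_{N,p}^{\,1/(p-1)}<1$ for all $1<p<p_0$. -/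
open Real Filter Set Topology

/-- With `S_{N,p}` Talenti's best Sobolev constant, `S_{N,p}^{1/(p-1)} → 0` as `p → 1⁺`;
in particular, for some `p₀ > 1`, both `S_{N,p} < 1` and `S_{N,p}^{1/(p-1)} < 1`
hold for all `1 < p < p₀`. -/
theorem stmt5 (N : ℕ) (hN : 2 ≤ N)
    (S : ℝ → ℝ)
    (hS : ∀ p : ℝ, 1 < p → p < N →
      S p = π ^ (-(1:ℝ)/2) * (N : ℝ) ^ (-(1/p)) * ((p - 1) / ((N : ℝ) - p)) ^ (1 - 1/p) *
          ((Real.Gamma (1 + N/2) * Real.Gamma N /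
              (Real.Gamma (N/p) * Real.Gamma (1 + N - N/p))) ^ ((1:ℝ)/N))) :
    Tendsto (fun p : ℝ => S p ^ (1 / (p - 1))) (nhdsWithin 1 (Ioi 1)) (nhds 0) ∧
    ∃ p₀ : ℝ, 1 < p₀ ∧ ∀ p : ℝ, 1 < p → p < p₀ → S p < 1 ∧ S p ^ (1 / (p - 1)) < 1 := by
  have hN2 : (2:ℝ) ≤ (N:ℝ) := by exact_mod_cast hN
  have hN1 : (1:ℝ) < (N:ℝ) := by linarith
  have hN0 : (0:ℝ) < (N:ℝ) := by linarith
  set L : ℝ := π ^ (-(1:ℝ)/2) * (N:ℝ) ^ (-(1:ℝ)) * Real.Gamma (1 + (N:ℝ)/2) ^ ((1:ℝ)/N)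
    with hLdef
  have hΓpos : 0 < Real.Gamma (1 + (N:ℝ)/2) := Real.Gamma_pos_of_pos (by linarith)
  have hπ : 0 < π ^ (-(1:ℝ)/2) := Real.rpow_pos_of_pos Real.pi_pos _
  have hLpos : 0 < L := by
    exact mul_pos (mul_pos hπ (Real.rpow_pos_of_pos hN0 _)) (Real.rpow_pos_of_pos hΓpos _)
  -- L < 1
  have hkey : Real.Gamma (1 + (N:ℝ)/2) ^ ((1:ℝ)/N) < (N:ℝ) := by
    have h1 : Real.Gamma (1 + (N:ℝ)/2) < Real.Gamma ((N:ℝ)+1) := by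
      apply Real.Gamma_strictMonoOn_Ici (by simp only [mem_Ici]; linarith)
        (by simp only [mem_Ici]; linarith)
      linarith
    have h2 : Real.Gamma ((N:ℝ)+1) = (N.factorial : ℝ) := by
      exact_mod_cast Real.Gamma_nat_eq_factorial N
    have h3 : (N.factorial : ℝ) ≤ (N:ℝ)^(N:ℕ) := by exact_mod_cast N.factorial_le_pow
    have h4 : Real.Gamma (1 + (N:ℝ)/2) < (N:ℝ)^(N:ℕ) := by
      rw [h2] at h1; linarith
    have h5 : Real.Gamma (1 + (N:ℝ)/2) ^ ((1:ℝ)/N) < ((N:ℝ)^(N:ℕ)) ^ ((1:ℝ)/N) :=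
      Real.rpow_lt_rpow hΓpos.le h4 (by positivity)
    have h6 : ((N:ℝ)^(N:ℕ)) ^ ((1:ℝ)/N) = (N:ℝ) := by
      rw [← Real.rpow_natCast (N:ℝ) N, ← Real.rpow_mul hN0.le]
      rw [mul_one_div, div_self hN0.ne', Real.rpow_one]
    rwa [h6] at h5
  have hL1 : L < 1 := by
    have hmain : (N:ℝ) ^ (-(1:ℝ)) * Real.Gamma (1 + (N:ℝ)/2) ^ ((1:ℝ)/N) < 1 := by
      rw [Real.rpow_neg_one]
      calc (N:ℝ)⁻¹ * Real.Gamma (1 + (N:ℝ)/2) ^ ((1:ℝ)/N)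
          < (N:ℝ)⁻¹ * (N:ℝ) := by
            exact mul_lt_mul_of_pos_left hkey (inv_pos.mpr hN0)
        _ = 1 := inv_mul_cancel₀ hN0.ne'
    have hπ1 : π ^ (-(1:ℝ)/2) ≤ 1 :=
      Real.rpow_le_one_of_one_le_of_nonpos (by linarith [Real.pi_gt_three]) (by norm_num)
    have hGpos : 0 < Real.Gamma (1 + (N:ℝ)/2) ^ ((1:ℝ)/N) := Real.rpow_pos_of_pos hΓpos _
    have : L < π ^ (-(1:ℝ)/2) * 1 := by
      rw [hLdef, mul_assoc]
      exact mul_lt_mul_of_pos_left hmain hπ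
    nlinarith
  -- membership of Ioo
  have hmem : Ioo (1:ℝ) (N:ℝ) ∈ 𝓝[>] (1:ℝ) := Ioo_mem_nhdsGT_of_mem ⟨le_refl 1, hN1⟩
  -- continuity of Gamma at positive points
  have hΓcont : ∀ x : ℝ, 0 < x → ContinuousAt Real.Gamma x := by
    intro x hx
    refine (Real.differentiableAt_Gamma ?_).continuousAt
    intro m
    have : (0:ℝ) ≤ m := Nat.cast_nonneg m
    intro h; rw [h] at hx; linarith
  -- T2
  have T2 : Tendsto (fun p : ℝ => (N:ℝ) ^ (-(1/p))) (𝓝 1) (𝓝 ((N:ℝ) ^ (-(1:ℝ)))) := by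
    have h2 : Tendsto (fun p : ℝ => -(1/p)) (𝓝 1) (𝓝 (-(1:ℝ))) := by
      have : ContinuousAt (fun p : ℝ => -(1/p)) 1 :=
        (continuousAt_const.div continuousAt_id one_ne_zero).neg
      simpa using this.tendsto
    exact (Real.continuousAt_const_rpow hN0.ne').tendsto.comp h2
  -- T4
  have hG1 : Real.Gamma (1 + (N:ℝ)/2) * Real.Gamma (N:ℝ) /
      (Real.Gamma ((N:ℝ)/1) * Real.Gamma (1 + (N:ℝ) - (N:ℝ)/1)) =
      Real.Gamma (1 + (N:ℝ)/2) := by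
    have hΓN : 0 < Real.Gamma (N:ℝ) := Real.Gamma_pos_of_pos hN0
    rw [div_one]
    have : (1 + (N:ℝ) - (N:ℝ)) = 1 := by ring
    rw [this, Real.Gamma_one, mul_one, mul_div_assoc, div_self hΓN.ne', mul_one]
  have T4 : Tendsto (fun p : ℝ => (Real.Gamma (1 + (N:ℝ)/2) * Real.Gamma (N:ℝ) /
      (Real.Gamma ((N:ℝ)/p) * Real.Gamma (1 + (N:ℝ) - (N:ℝ)/p))) ^ ((1:ℝ)/N)) (𝓝 1)
      (𝓝 (Real.Gamma (1 + (N:ℝ)/2) ^ ((1:ℝ)/N))) := by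
    have hdiv : ContinuousAt (fun p : ℝ => (N:ℝ)/p) 1 :=
      continuousAt_const.div continuousAt_id one_ne_zero
    have hinner1 : ContinuousAt (fun p : ℝ => Real.Gamma ((N:ℝ)/p)) 1 :=
      ContinuousAt.comp (g := Real.Gamma)
        (hΓcont ((N:ℝ)/1) (by rw [div_one]; exact hN0)) hdiv
    have hdiv2 : ContinuousAt (fun p : ℝ => 1 + (N:ℝ) - (N:ℝ)/p) 1 :=
      (continuousAt_const.sub hdiv)
    have hinner2 : ContinuousAt (fun p : ℝ => Real.Gamma (1 + (N:ℝ) - (N:ℝ)/p)) 1 :=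
      ContinuousAt.comp (g := Real.Gamma)
        (hΓcont (1 + (N:ℝ) - (N:ℝ)/1) (by rw [div_one]; linarith)) hdiv2
    have hden : (fun p : ℝ => Real.Gamma ((N:ℝ)/p) * Real.Gamma (1 + (N:ℝ) - (N:ℝ)/p)) 1 ≠ 0 := by
      simp only [div_one]
      have h1 : 0 < Real.Gamma (N:ℝ) := Real.Gamma_pos_of_pos hN0
      have h2 : 0 < Real.Gamma (1 + (N:ℝ) - (N:ℝ)) := by
        have : (1 + (N:ℝ) - (N:ℝ)) = 1 := by ring
        rw [this]; exact Real.Gamma_pos_of_pos one_pos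
      exact (mul_pos h1 h2).ne'
    have hGcont : ContinuousAt (fun p : ℝ => Real.Gamma (1 + (N:ℝ)/2) * Real.Gamma (N:ℝ) /
        (Real.Gamma ((N:ℝ)/p) * Real.Gamma (1 + (N:ℝ) - (N:ℝ)/p))) 1 :=
      ContinuousAt.div continuousAt_const (hinner1.mul hinner2) hden
    have hfull : ContinuousAt (fun p : ℝ => (Real.Gamma (1 + (N:ℝ)/2) * Real.Gamma (N:ℝ) /
        (Real.Gamma ((N:ℝ)/p) * Real.Gamma (1 + (N:ℝ) - (N:ℝ)/p))) ^ ((1:ℝ)/N)) 1 :=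
      hGcont.rpow_const (Or.inr (by positivity))
    have := hfull.tendsto
    simpa only [hG1] using this
  -- T3
  have T3 : Tendsto (fun p : ℝ => ((p - 1) / ((N:ℝ) - p)) ^ (1 - 1/p)) (𝓝[>] (1:ℝ))
      (𝓝 1) := by
    have hexp : Tendsto (fun p : ℝ => Real.log ((p - 1) / ((N:ℝ) - p)) * (1 - 1/p))
        (𝓝[>] (1:ℝ)) (𝓝 0) := by
      have heq : ∀ᶠ p in 𝓝[>] (1:ℝ),
          Real.log ((p - 1) / ((N:ℝ) - p)) * (1 - 1/p) =
          ((p - 1) * Real.log (p - 1) - (p - 1) * Real.log ((N:ℝ) - p)) / p := by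
        filter_upwards [hmem] with p hp
        have hp1 : 0 < p - 1 := by linarith [hp.1]
        have hp2 : 0 < (N:ℝ) - p := by linarith [hp.2]
        have hp0 : (0:ℝ) < p := by linarith [hp.1]
        rw [Real.log_div hp1.ne' hp2.ne']
        field_simp
      rw [tendsto_congr' heq]
      have t1 : Tendsto (fun p : ℝ => (p - 1) * Real.log (p - 1)) (𝓝 1) (𝓝 0) := by
        have hc : Continuous fun p : ℝ => (p - 1) * Real.log (p - 1) :=
          Real.continuous_mul_log.comp (continuous_id.sub continuous_const)
        have := hc.tendsto 1
        simpa using this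
      have t2 : Tendsto (fun p : ℝ => (p - 1) * Real.log ((N:ℝ) - p)) (𝓝 1) (𝓝 0) := by
        have hc : ContinuousAt (fun p : ℝ => (p - 1) * Real.log ((N:ℝ) - p)) 1 := by
          apply ContinuousAt.mul
          · exact continuousAt_id.sub continuousAt_const
          · exact (Real.continuousAt_log (by norm_num; linarith)).comp
              (continuousAt_const.sub continuousAt_id)
        have := hc.tendsto
        simpa using this
      have t3 : Tendsto (fun p : ℝ =>
          ((p - 1) * Real.log (p - 1) - (p - 1) * Real.log ((N:ℝ) - p)) / p) (𝓝 1)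
          (𝓝 ((0 - 0) / 1)) := (t1.sub t2).div tendsto_id one_ne_zero
      have : ((0:ℝ) - 0) / 1 = 0 := by norm_num
      rw [this] at t3
      exact t3.mono_left nhdsWithin_le_nhds
    have hev : ∀ᶠ p in 𝓝[>] (1:ℝ),
        Real.exp (Real.log ((p - 1) / ((N:ℝ) - p)) * (1 - 1/p)) =
        ((p - 1) / ((N:ℝ) - p)) ^ (1 - 1/p) := by
      filter_upwards [hmem] with p hp
      have hp1 : 0 < p - 1 := by linarith [hp.1]
      have hp2 : 0 < (N:ℝ) - p := by linarith [hp.2]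
      rw [Real.rpow_def_of_pos (div_pos hp1 hp2)]
    have := (Real.continuous_exp.tendsto 0).comp hexp
    simp only [Function.comp, Real.exp_zero] at this
    exact this.congr' hev
  -- tendsto of S
  have hC : Tendsto S (𝓝[>] (1:ℝ)) (𝓝 L) := by
    have hform : Tendsto (fun p : ℝ =>
        π ^ (-(1:ℝ)/2) * (N:ℝ) ^ (-(1/p)) * ((p - 1) / ((N:ℝ) - p)) ^ (1 - 1/p) *
          ((Real.Gamma (1 + (N:ℝ)/2) * Real.Gamma (N:ℝ) /
            (Real.Gamma ((N:ℝ)/p) * Real.Gamma (1 + (N:ℝ) - (N:ℝ)/p))) ^ ((1:ℝ)/N)))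
        (𝓝[>] (1:ℝ))
        (𝓝 (π ^ (-(1:ℝ)/2) * (N:ℝ) ^ (-(1:ℝ)) * 1 * Real.Gamma (1 + (N:ℝ)/2) ^ ((1:ℝ)/N))) :=
      ((tendsto_const_nhds.mul (T2.mono_left nhdsWithin_le_nhds)).mul T3).mul
        (T4.mono_left nhdsWithin_le_nhds)
    have hval : π ^ (-(1:ℝ)/2) * (N:ℝ) ^ (-(1:ℝ)) * 1 * Real.Gamma (1 + (N:ℝ)/2) ^ ((1:ℝ)/N)
        = L := by rw [hLdef, mul_one]
    rw [hval] at hform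
    refine hform.congr' ?_
    filter_upwards [hmem] with p hp
    exact (hS p hp.1 hp.2).symm
  -- S p ≥ 0 eventually, and formula positivity
  have hSpos : ∀ᶠ p in 𝓝[>] (1:ℝ), 0 < S p := by
    filter_upwards [hmem] with p hp
    rw [hS p hp.1 hp.2]
    have hp1 : 0 < p - 1 := by linarith [hp.1]
    have hp2 : 0 < (N:ℝ) - p := by linarith [hp.2]
    have hb : 0 < (p - 1) / ((N:ℝ) - p) := div_pos hp1 hp2
    have hp0 : (0:ℝ) < p := by linarith [hp.1]
    have hGa : 0 < Real.Gamma ((N:ℝ)/p) := Real.Gamma_pos_of_pos (div_pos hN0 hp0)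
    have hGb : 0 < Real.Gamma (1 + (N:ℝ) - (N:ℝ)/p) := by
      apply Real.Gamma_pos_of_pos
      have : (N:ℝ)/p < (N:ℝ)/1 := by
        apply div_lt_div_of_pos_left hN0 one_pos hp.1
      rw [div_one] at this
      linarith
    have hGN : 0 < Real.Gamma (N:ℝ) := Real.Gamma_pos_of_pos hN0
    have hG : 0 < Real.Gamma (1 + (N:ℝ)/2) * Real.Gamma (N:ℝ) /
        (Real.Gamma ((N:ℝ)/p) * Real.Gamma (1 + (N:ℝ) - (N:ℝ)/p)) := by positivity
    positivity
  -- squeeze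
  set c : ℝ := (1 + L) / 2 with hcdef
  have hc0 : 0 < c := by rw [hcdef]; linarith
  have hc1 : c < 1 := by rw [hcdef]; linarith
  have hev_lt : ∀ᶠ p in 𝓝[>] (1:ℝ), S p < c := hC.eventually_lt_const (by rw [hcdef]; linarith)
  have h1div : Tendsto (fun p : ℝ => 1 / (p - 1)) (𝓝[>] (1:ℝ)) atTop := by
    have hsub : Tendsto (fun p : ℝ => p - 1) (𝓝[>] (1:ℝ)) (𝓝[>] (0:ℝ)) := by
      apply tendsto_nhdsWithin_of_tendsto_nhds_of_eventually_within
      · have : Tendsto (fun p : ℝ => p - 1) (𝓝 1) (𝓝 (1 - 1)) :=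
          (continuous_id.sub continuous_const).tendsto 1
        simpa using this.mono_left nhdsWithin_le_nhds
      · filter_upwards [self_mem_nhdsWithin] with p hp
        simp only [mem_Ioi] at hp ⊢
        linarith
    simpa only [one_div, Function.comp_def] using tendsto_inv_nhdsGT_zero.comp hsub
  have hg : Tendsto (fun p : ℝ => c ^ (1 / (p - 1))) (𝓝[>] (1:ℝ)) (𝓝 0) :=
    (tendsto_rpow_atTop_of_base_lt_one c (by linarith) hc1).comp h1div
  have hf0 : ∀ᶠ p in 𝓝[>] (1:ℝ), 0 ≤ S p ^ (1 / (p - 1)) := by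
    filter_upwards [hSpos] with p hp
    exact Real.rpow_nonneg hp.le _
  have hfg : ∀ᶠ p in 𝓝[>] (1:ℝ), S p ^ (1 / (p - 1)) ≤ c ^ (1 / (p - 1)) := by
    filter_upwards [hSpos, hev_lt, self_mem_nhdsWithin] with p hp hlt hp1
    simp only [mem_Ioi] at hp1
    have hd : (0:ℝ) < p - 1 := by linarith
    exact Real.rpow_le_rpow hp.le hlt.le (by positivity)
  have main1 : Tendsto (fun p : ℝ => S p ^ (1 / (p - 1))) (𝓝[>] (1:ℝ)) (𝓝 0) :=
    squeeze_zero' hf0 hfg hg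
  refine ⟨main1, ?_⟩
  have hlt1 : ∀ᶠ p in 𝓝[>] (1:ℝ), S p < 1 := hC.eventually_lt_const hL1
  have hlt2 : ∀ᶠ p in 𝓝[>] (1:ℝ), S p ^ (1 / (p - 1)) < 1 :=
    main1.eventually_lt_const one_pos
  have hand := hlt1.and hlt2
  rw [eventually_iff, mem_nhdsGT_iff_exists_Ioo_subset] at hand
  obtain ⟨u, hu, hsub⟩ := hand
  exact ⟨u, hu, fun p hp1 hpu => hsub ⟨hp1, hpu⟩⟩
end

section
/- Let $N\ge 1$ be an integer and $\lambda>N$ a real number. Let $x\in\mathbb{R}^N$ with $N/\lambda<|x|<1$, and define near $x$ the functions $u(y)=1-|y|^{-(N-1)}e^{\lambda(|y|-1)}$ and $z(y)=-y/|y|$. Then $u$ and $z$ are continuously differentiable near $x$, and: (i) $\mathrm{div}\,z(x)=-(N-1)/|x|$; (ii) $\nabla u(x)=-\left(\lambda-\frac{N-1}{|x|}\right)(1-u(x))\,\frac{x}{|x|}$; (iii) $|\nabla u(x)|=\left(\lambda-\frac{N-1}{|x|}\right)(1-u(x))>0$ and $\nabla u(x)=|\nabla u(x)|\,z(x)$;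 (iv) $-\mathrm{div}\,z(x)+\frac{|\nabla u(x)|}{1-u(x)}=\lambda$. -/
open Real
open scoped RealInnerProductSpace

private lemma hasFDerivAt_norm'' {E : Type*} [NormedAddCommGroup E] [InnerProductSpace ℝ E]
    {x : E} (hx : x ≠ 0) :
    HasFDerivAt (fun y : E => ‖y‖) (‖x‖⁻¹ • innerSL ℝ x) x := by
  have hr : (0:ℝ) < ‖x‖ := norm_pos_iff.mpr hx
  have hsq : HasFDerivAt (fun y : E => ‖y‖ ^ 2) (2 • innerSL ℝ x) x := by
    simpa using (hasFDerivAt_id x).norm_sq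
  have hs : HasDerivAt Real.sqrt (1 / (2 * Real.sqrt (‖x‖ ^ 2))) (‖x‖ ^ 2) :=
    Real.hasDerivAt_sqrt (by positivity)
  have h := hs.comp_hasFDerivAt x hsq
  have heq : (Real.sqrt ∘ fun y : E => ‖y‖ ^ 2) = fun y : E => ‖y‖ := by
    funext y; simp [Real.sqrt_sq (norm_nonneg y)]
  rw [heq] at h
  refine h.congr_fderiv ?_
  rw [Real.sqrt_sq (norm_nonneg x)]
  ext v
  simp [ContinuousLinearMap.smul_apply]
  field_simp

/-- On the annulus `N/λ < |x| < 1`, the radial profile `u(y) = 1 - |y|^{-(N-1)} e^{λ(|y|-1)}`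
and the vector field `z(y) = -y/|y|` are `C¹` near `x`, and satisfy:
`div z(x) = -(N-1)/|x|`, `∇u(x) = -(λ - (N-1)/|x|)(1-u(x)) x/|x|`,
`|∇u(x)| = (λ - (N-1)/|x|)(1-u(x)) > 0` with `∇u(x) = |∇u(x)| z(x)`, and
`-div z(x) + |∇u(x)|/(1-u(x)) = λ`. -/
theorem stmt11 (N : ℕ) (hN : 1 ≤ N) (lam : ℝ) (hlam : (N : ℝ) < lam)
    (x : EuclideanSpace ℝ (Fin N)) (hx1 : (N : ℝ) / lam < ‖x‖) (hx2 : ‖x‖ < 1) :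
    let u : EuclideanSpace ℝ (Fin N) → ℝ :=
      fun y => 1 - ‖y‖ ^ (-((N : ℝ) - 1)) * Real.exp (lam * (‖y‖ - 1))
    let z : EuclideanSpace ℝ (Fin N) → EuclideanSpace ℝ (Fin N) :=
      fun y => -(‖y‖⁻¹ • y)
    let divz : ℝ := ∑ i, fderiv ℝ (fun y => z y i) x (EuclideanSpace.single i 1)
    ContDiffAt ℝ 1 u x ∧ ContDiffAt ℝ 1 z x ∧
    divz = -(((N : ℝ) - 1) / ‖x‖) ∧
    gradient u x = (-((lam - ((N : ℝ) - 1) / ‖x‖) * (1 - u x)) * ‖x‖⁻¹) • x ∧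
    ‖gradient u x‖ = (lam - ((N : ℝ) - 1) / ‖x‖) * (1 - u x) ∧
    0 < ‖gradient u x‖ ∧
    gradient u x = ‖gradient u x‖ • z x ∧
    -divz + ‖gradient u x‖ / (1 - u x) = lam := by
  intro u z divz
  have hu_def : u = fun y => 1 - ‖y‖ ^ (-((N : ℝ) - 1)) * Real.exp (lam * (‖y‖ - 1)) := rfl
  have hz_def : z = fun y : EuclideanSpace ℝ (Fin N) => -(‖y‖⁻¹ • y) := rfl
  have hdivz_def : divz = ∑ i, fderiv ℝ (fun y => z y i) x (EuclideanSpace.single i 1) := rfl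
  rw [hdivz_def, hz_def, hu_def]
  clear hu_def hz_def hdivz_def
  clear_value u z divz
  clear u z divz
  have hN1 : (1:ℝ) ≤ N := by exact_mod_cast hN
  have hlam0 : (0:ℝ) < lam := lt_of_lt_of_le (by linarith) hlam.le
  have hr : (0:ℝ) < ‖x‖ := lt_of_le_of_lt (div_nonneg (by positivity) hlam0.le) hx1
  have hx0 : x ≠ 0 := by simpa [← norm_pos_iff] using hr
  have hnorm := hasFDerivAt_norm'' hx0
  set a : ℝ := -((N:ℝ) - 1) with ha
  set u : EuclideanSpace ℝ (Fin N) → ℝ :=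
    fun y => 1 - ‖y‖ ^ a * Real.exp (lam * (‖y‖ - 1)) with hu_def
  set z : EuclideanSpace ℝ (Fin N) → EuclideanSpace ℝ (Fin N) :=
    fun y => -(‖y‖⁻¹ • y) with hz_def
  set D : EuclideanSpace ℝ (Fin N) →L[ℝ] EuclideanSpace ℝ (Fin N) :=
    -(‖x‖⁻¹ • ContinuousLinearMap.id ℝ (EuclideanSpace ℝ (Fin N)) +
      ((-(‖x‖ ^ 2)⁻¹) • (‖x‖⁻¹ • innerSL ℝ x)).smulRight x) with hD_def
  -- z derivative
  have hinv : HasFDerivAt (fun y : EuclideanSpace ℝ (Fin N) => ‖y‖⁻¹)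
      ((-(‖x‖ ^ 2)⁻¹) • (‖x‖⁻¹ • innerSL ℝ x)) x :=
    (hasDerivAt_inv hr.ne').comp_hasFDerivAt x hnorm
  have hzD : HasFDerivAt z D x := (hinv.smul (hasFDerivAt_id x)).neg
  have hcomp : ∀ i, fderiv ℝ (fun y => z y i) x = (EuclideanSpace.proj i).comp D := by
    intro i
    have h := (EuclideanSpace.proj (𝕜 := ℝ) i).hasFDerivAt.comp x hzD
    have heq : (⇑(EuclideanSpace.proj (𝕜 := ℝ) i) ∘ z) = fun y => z y i := by
      funext y; simp
    rw [heq] at h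
    exact h.fderiv
  have hDi : ∀ i, D (EuclideanSpace.single i 1) i
      = -(‖x‖⁻¹ + (-(‖x‖ ^ 2)⁻¹ * (‖x‖⁻¹ * x i)) * x i) := by
    intro i
    simp [hD_def, ContinuousLinearMap.smulRight_apply, EuclideanSpace.inner_single_right,
      PiLp.smul_apply, PiLp.add_apply, PiLp.neg_apply, smul_eq_mul]
  have hsum : ∑ i, x i * x i = ‖x‖ ^ 2 := by
    have := real_inner_self_eq_norm_sq x
    rw [PiLp.inner_apply] at this
    simpa [RCLike.inner_apply, ← sq] using this
  have hdiv : ∑ i, fderiv ℝ (fun y => z y i) x (EuclideanSpace.single i 1)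
      = -(((N:ℝ) - 1) / ‖x‖) := by
    have hterm : ∀ i, fderiv ℝ (fun y => z y i) x (EuclideanSpace.single i 1)
        = -‖x‖⁻¹ + ((‖x‖ ^ 2)⁻¹ * ‖x‖⁻¹) * (x i * x i) := by
      intro i
      rw [hcomp i, ContinuousLinearMap.comp_apply]
      have : (EuclideanSpace.proj (𝕜 := ℝ) i) (D (EuclideanSpace.single i 1))
          = D (EuclideanSpace.single i 1) i := by simp
      rw [this, hDi i]; ring
    simp only [hterm]
    rw [Finset.sum_add_distrib, Finset.sum_const, ← Finset.mul_sum, hsum,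
      Finset.card_univ, Fintype.card_fin]
    simp only [nsmul_eq_mul]
    field_simp
    ring
  -- u derivative
  have hpow : HasDerivAt (fun t : ℝ => t ^ a) (a * ‖x‖ ^ (a - 1)) ‖x‖ :=
    Real.hasDerivAt_rpow_const (Or.inl hr.ne')
  have hlin : HasDerivAt (fun t : ℝ => lam * (t - 1)) lam ‖x‖ := by
    simpa using ((hasDerivAt_id ‖x‖).sub_const 1).const_mul lam
  have hf : HasDerivAt (fun t : ℝ => 1 - t ^ a * Real.exp (lam * (t - 1)))
      (-(a * ‖x‖ ^ (a - 1) * Real.exp (lam * (‖x‖ - 1)) +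
        ‖x‖ ^ a * (Real.exp (lam * (‖x‖ - 1)) * lam))) ‖x‖ :=
    (hpow.mul hlin.exp).const_sub 1
  have h1u : 1 - u x = ‖x‖ ^ a * Real.exp (lam * (‖x‖ - 1)) := by
    simp [hu_def]
  have hK : -(a * ‖x‖ ^ (a - 1) * Real.exp (lam * (‖x‖ - 1)) +
        ‖x‖ ^ a * (Real.exp (lam * (‖x‖ - 1)) * lam))
      = -((lam - ((N:ℝ) - 1) / ‖x‖) * (1 - u x)) := by
    rw [h1u, ha, Real.rpow_sub_one hr.ne']
    field_simp
    ring
  have hu : HasFDerivAt u ((-((lam - ((N:ℝ) - 1) / ‖x‖) * (1 - u x))) •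
      (‖x‖⁻¹ • innerSL ℝ x)) x := by
    have h := hf.comp_hasFDerivAt x hnorm
    rw [hK] at h
    exact h
  have hgrad : HasGradientAt u ((-((lam - ((N:ℝ) - 1) / ‖x‖) * (1 - u x)) * ‖x‖⁻¹) • x) x := by
    rw [hasGradientAt_iff_hasFDerivAt]
    have heq : (InnerProductSpace.toDual ℝ (EuclideanSpace ℝ (Fin N)))
        ((-((lam - ((N:ℝ) - 1) / ‖x‖) * (1 - u x)) * ‖x‖⁻¹) • x)
        = (-((lam - ((N:ℝ) - 1) / ‖x‖) * (1 - u x))) • (‖x‖⁻¹ • innerSL ℝ x) := by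
      ext v
      simp [InnerProductSpace.toDual_apply_apply, real_inner_smul_left]
      ring
    rw [heq]
    exact hu
  have hupos : 0 < 1 - u x := by rw [h1u]; positivity
  have hNlr : (N:ℝ) < ‖x‖ * lam := (div_lt_iff₀ hlam0).mp hx1
  have hKpos : 0 < lam - ((N:ℝ) - 1) / ‖x‖ := by
    rw [sub_pos, div_lt_iff₀ hr]; nlinarith
  have hKp : 0 < (lam - ((N:ℝ) - 1) / ‖x‖) * (1 - u x) := mul_pos hKpos hupos
  have hgval : gradient u x = (-((lam - ((N:ℝ) - 1) / ‖x‖) * (1 - u x)) * ‖x‖⁻¹) • x :=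
    hgrad.gradient
  have hgn : ‖gradient u x‖ = (lam - ((N:ℝ) - 1) / ‖x‖) * (1 - u x) := by
    rw [hgval, norm_smul, Real.norm_eq_abs,
      abs_of_neg (mul_neg_of_neg_of_pos (neg_neg_iff_pos.mpr hKp) (inv_pos.mpr hr))]
    field_simp
  -- ContDiffAt facts
  have hnC : ContDiffAt ℝ 1 (fun y : EuclideanSpace ℝ (Fin N) => ‖y‖) x :=
    contDiffAt_norm ℝ hx0
  have huC : ContDiffAt ℝ 1 u x := by
    have hrpow : ContDiffAt ℝ 1 (fun t : ℝ => t ^ a) ‖x‖ :=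
      Real.contDiffAt_rpow_const_of_ne hr.ne'
    have h1 : ContDiffAt ℝ 1 (fun y : EuclideanSpace ℝ (Fin N) => ‖y‖ ^ a) x :=
      hrpow.comp x hnC
    have h2 : ContDiffAt ℝ 1 (fun y : EuclideanSpace ℝ (Fin N) =>
        Real.exp (lam * (‖y‖ - 1))) x :=
      (Real.contDiff_exp.contDiffAt).comp x (contDiffAt_const.mul (hnC.sub contDiffAt_const))
    exact contDiffAt_const.sub (h1.mul h2)
  have hzC : ContDiffAt ℝ 1 z x := ((hnC.inv hr.ne').smul contDiffAt_id).neg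
  refine ⟨huC, hzC, hdiv, hgval, hgn, ?_, ?_, ?_⟩
  · rw [hgn]; exact hKp
  · rw [hgn, hgval, hz_def]
    show _ = ((lam - ((N:ℝ) - 1) / ‖x‖) * (1 - u x)) • -(‖x‖⁻¹ • x)
    rw [smul_neg, smul_smul, ← neg_smul, neg_mul]
  · rw [hdiv, hgn, mul_div_assoc, div_self hupos.ne', mul_one]
    ring
end

section
/- Let $N\ge 1$ be an integer and $\lambda>N$ a real number. Define $u:\overline{B_1}\to\mathbb{R}$ by $u(x)=1-(\lambda/N)^{N-1}e^{N-\lambda}$ for $|x|\le N/\lambda$ and $u(x)=1-|x|^{-(N-1)}e^{\lambda(|x|-1)}$ for $N/\lambda<|x|\le 1$. Then: (i) $u$ is continuous on the closed unit ball (in particular the two formulas agree on the sphere $|x|=N/\lambda$); (ii) $u(x)=0$ for $|x|=1$; (iii) $0\le u(x)<1$ for every $|x|\le 1$; (iv) $u(x)>0$ for $|x|<1$, so $u$ is a nonconstant function vanishing on the boundary. -/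
open Metric Real

private lemma st13_exp_form (N : ℕ) (lam r : ℝ) (hr0 : 0 < r) :
    r ^ (-((N:ℝ) - 1)) * Real.exp (lam * (r - 1))
      = Real.exp (lam * (r - 1) - ((N:ℝ) - 1) * Real.log r) := by
  rw [Real.rpow_def_of_pos hr0, ← Real.exp_add]
  congr 1; ring

private lemma st13_le (N : ℕ) (hN : 1 ≤ N) (lam r : ℝ) (hlam : (N:ℝ) < lam) (hr0 : 0 < r)
    (hNr : (N:ℝ) - 1 ≤ lam * r) (hr2 : r ≤ 1) :
    r ^ (-((N:ℝ) - 1)) * Real.exp (lam * (r - 1)) ≤ 1 := by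
  have h1 : (0:ℝ) ≤ (N:ℝ) - 1 := by
    have : (1:ℝ) ≤ N := by exact_mod_cast hN
    linarith
  have hlog : Real.log (1/r) ≤ 1/r - 1 := Real.log_le_sub_one_of_pos (by positivity)
  have hlogr : Real.log (1/r) = - Real.log r := by rw [one_div, Real.log_inv]
  have hinv : r * (1/r) = 1 := by field_simp
  have h2 : ((N:ℝ)-1) * (1/r - 1) ≤ lam * (1 - r) := by
    nlinarith [mul_nonneg (sub_nonneg.2 hr2) (sub_nonneg.2 hNr)]
  have h3 : ((N:ℝ)-1) * (-Real.log r) ≤ ((N:ℝ)-1) * (1/r - 1) :=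
    hlogr ▸ mul_le_mul_of_nonneg_left hlog h1
  have hexp : lam * (r - 1) - ((N:ℝ)-1) * Real.log r ≤ 0 := by linarith
  rw [st13_exp_form N lam r hr0]
  exact Real.exp_le_one_iff.2 hexp

private lemma st13_lt (N : ℕ) (hN : 1 ≤ N) (lam r : ℝ) (hlam : (N:ℝ) < lam) (hr0 : 0 < r)
    (hNr : (N:ℝ) - 1 ≤ lam * r) (hr2 : r < 1) :
    r ^ (-((N:ℝ) - 1)) * Real.exp (lam * (r - 1)) < 1 := by
  have h1 : (0:ℝ) ≤ (N:ℝ) - 1 := by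
    have : (1:ℝ) ≤ N := by exact_mod_cast hN
    linarith
  have hlampos : (0:ℝ) < lam := lt_of_le_of_lt (by positivity) hlam
  have hexp : lam * (r - 1) - ((N:ℝ)-1) * Real.log r < 0 := by
    rcases eq_or_lt_of_le h1 with h | h
    · rw [← h]; nlinarith
    · have hlog : Real.log (1/r) < 1/r - 1 :=
        Real.log_lt_sub_one_of_pos (by positivity) (by
          intro hc
          have : r = 1 := by field_simp at hc; linarith
          linarith)
      have hlogr : Real.log (1/r) = - Real.log r := by rw [one_div, Real.log_inv]
      have hinv : r * (1/r) = 1 := by field_simp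
      have h2 : ((N:ℝ)-1) * (1/r - 1) ≤ lam * (1 - r) := by
        nlinarith [mul_nonneg (by linarith : (0:ℝ) ≤ 1 - r) (sub_nonneg.2 hNr)]
      have h3 : ((N:ℝ)-1) * (-Real.log r) < ((N:ℝ)-1) * (1/r - 1) :=
        hlogr ▸ (mul_lt_mul_of_pos_left hlog h)
      linarith
  rw [st13_exp_form N lam r hr0]
  exact Real.exp_lt_one_iff.2 hexp

private lemma st13_agree (N : ℕ) (hN : 1 ≤ N) (lam : ℝ) (hlam : (N:ℝ) < lam) :
    (lam / N) ^ (N - 1) * Real.exp ((N:ℝ) - lam)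
      = ((N:ℝ)/lam) ^ (-((N:ℝ) - 1)) * Real.exp (lam * ((N:ℝ)/lam - 1)) := by
  have hNpos : (0:ℝ) < N := by exact_mod_cast hN
  have hlampos : (0:ℝ) < lam := lt_trans hNpos hlam
  have hcast : ((N:ℝ) - 1) = ((N - 1 : ℕ) : ℝ) := by
    rw [Nat.cast_sub hN]; norm_num
  have hb : (0:ℝ) < (N:ℝ)/lam := by positivity
  have h1 : ((N:ℝ)/lam) ^ (-((N:ℝ) - 1)) = (lam / N) ^ (N - 1) := by
    rw [hcast, Real.rpow_neg hb.le, Real.rpow_natCast, ← inv_pow, inv_div]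
  have h2 : lam * ((N:ℝ)/lam - 1) = (N:ℝ) - lam := by field_simp
  rw [h1, h2]
/-- The explicit radial profile `u(x) = 1 - (λ/N)^{N-1} e^{N-λ}` for `|x| ≤ N/λ`,
`u(x) = 1 - |x|^{-(N-1)} e^{λ(|x|-1)}` for `N/λ < |x| ≤ 1` (with `λ > N`): the two formulas
agree on the sphere `|x| = N/λ`, `u` is continuous on the closed unit ball, vanishes on the
boundary sphere, satisfies `0 ≤ u < 1`, is positive inside, and is nonconstant. -/
theorem stmt13 (N : ℕ) (hN : 1 ≤ N) (lam : ℝ) (hlam : (N : ℝ) < lam) :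
    let u : EuclideanSpace ℝ (Fin N) → ℝ := fun x =>
      if ‖x‖ ≤ (N : ℝ) / lam then 1 - (lam / N) ^ (N - 1) * Real.exp ((N : ℝ) - lam)
      else 1 - ‖x‖ ^ (-((N : ℝ) - 1)) * Real.exp (lam * (‖x‖ - 1))
    (∀ x : EuclideanSpace ℝ (Fin N), ‖x‖ = (N : ℝ) / lam →
        1 - (lam / N) ^ (N - 1) * Real.exp ((N : ℝ) - lam)
          = 1 - ‖x‖ ^ (-((N : ℝ) - 1)) * Real.exp (lam * (‖x‖ - 1))) ∧
    ContinuousOn u (closedBall 0 1) ∧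
    (∀ x : EuclideanSpace ℝ (Fin N), ‖x‖ = 1 → u x = 0) ∧
    (∀ x : EuclideanSpace ℝ (Fin N), ‖x‖ ≤ 1 → 0 ≤ u x ∧ u x < 1) ∧
    (∀ x : EuclideanSpace ℝ (Fin N), ‖x‖ < 1 → 0 < u x) ∧
    ¬ (∀ x ∈ closedBall (0 : EuclideanSpace ℝ (Fin N)) 1,
        ∀ y ∈ closedBall (0 : EuclideanSpace ℝ (Fin N)) 1, u x = u y) := by
  intro u
  have hNpos : (0:ℝ) < N := by exact_mod_cast hN
  have hlampos : (0:ℝ) < lam := lt_trans hNpos hlam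
  have hb : (0:ℝ) < (N:ℝ)/lam := by positivity
  have hb1 : (N:ℝ)/lam < 1 := (div_lt_one hlampos).2 hlam
  have hbN : lam * ((N:ℝ)/lam) = N := by field_simp
  have hc0 : (0:ℝ) < (lam / N) ^ (N - 1) * Real.exp ((N:ℝ) - lam) := by positivity
  have hc1 : (lam / N) ^ (N - 1) * Real.exp ((N:ℝ) - lam) < 1 := by
    rw [st13_agree N hN lam hlam]
    exact st13_lt N hN lam _ hlam hb (by rw [hbN]; linarith) hb1
  -- outer branch bounds
  have houter_le : ∀ r : ℝ, (N:ℝ)/lam < r → r ≤ 1 →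
      r ^ (-((N:ℝ)-1)) * Real.exp (lam * (r - 1)) ≤ 1 := by
    intro r h1 h2
    have hr0 : 0 < r := lt_trans hb h1
    refine st13_le N hN lam r hlam hr0 ?_ h2
    have := mul_le_mul_of_nonneg_left h1.le hlampos.le
    rw [hbN] at this; linarith
  have houter_lt : ∀ r : ℝ, (N:ℝ)/lam < r → r < 1 →
      r ^ (-((N:ℝ)-1)) * Real.exp (lam * (r - 1)) < 1 := by
    intro r h1 h2
    have hr0 : 0 < r := lt_trans hb h1
    refine st13_lt N hN lam r hlam hr0 ?_ h2
    have := mul_le_mul_of_nonneg_left h1.le hlampos.le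
    rw [hbN] at this; linarith
  have houter_pos : ∀ r : ℝ, 0 < r →
      0 < r ^ (-((N:ℝ)-1)) * Real.exp (lam * (r - 1)) := by
    intro r hr0
    exact mul_pos (Real.rpow_pos_of_pos hr0 _) (Real.exp_pos _)
  -- boundary vanish
  have hbd : ∀ x : EuclideanSpace ℝ (Fin N), ‖x‖ = 1 → u x = 0 := by
    intro x hx
    simp only [u, hx, not_le.2 hb1, if_false, Real.one_rpow, sub_self, mul_zero,
      Real.exp_zero, mul_one]
  refine ⟨?_, ?_, hbd, ?_, ?_, ?_⟩
  · intro x hx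
    rw [hx, st13_agree N hN lam hlam]
  · -- continuity
    have hueq : ∀ x, u x = 1 - (max ((N:ℝ)/lam) ‖x‖) ^ (-((N:ℝ)-1)) *
        Real.exp (lam * (max ((N:ℝ)/lam) ‖x‖ - 1)) := by
      intro x
      by_cases h : ‖x‖ ≤ (N:ℝ)/lam
      · simp only [u, if_pos h, max_eq_left h]
        rw [st13_agree N hN lam hlam]
      · simp only [u, if_neg h, max_eq_right (le_of_not_ge h)]
    have hm : Continuous fun x : EuclideanSpace ℝ (Fin N) => max ((N:ℝ)/lam) ‖x‖ :=
      continuous_const.max continuous_norm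
    have h1 : Continuous fun x : EuclideanSpace ℝ (Fin N) =>
        (max ((N:ℝ)/lam) ‖x‖) ^ (-((N:ℝ)-1)) := by
      rw [continuous_iff_continuousAt]
      intro x
      exact hm.continuousAt.rpow_const
        (Or.inl (ne_of_gt (lt_of_lt_of_le hb (le_max_left _ _))))
    have hcont : Continuous fun x : EuclideanSpace ℝ (Fin N) =>
        1 - (max ((N:ℝ)/lam) ‖x‖) ^ (-((N:ℝ)-1)) *
          Real.exp (lam * (max ((N:ℝ)/lam) ‖x‖ - 1)) :=
      continuous_const.sub (h1.mul (Real.continuous_exp.comp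
        (continuous_const.mul (hm.sub continuous_const))))
    exact hcont.continuousOn.congr fun x _ => hueq x
  · intro x hx
    by_cases h : ‖x‖ ≤ (N:ℝ)/lam
    · simp only [u, if_pos h]
      constructor <;> linarith
    · have h' := not_le.1 h
      simp only [u, if_neg h]
      have h1 := houter_le ‖x‖ h' hx
      have h2 := houter_pos ‖x‖ (lt_trans hb h')
      constructor <;> linarith
  · intro x hx
    by_cases h : ‖x‖ ≤ (N:ℝ)/lam
    · simp only [u, if_pos h]; linarith
    · have h' := not_le.1 h
      simp only [u, if_neg h]
      have h1 := houter_lt ‖x‖ h' hx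
      linarith
  · intro hcontr
    set y : EuclideanSpace ℝ (Fin N) := EuclideanSpace.single (⟨0, hN⟩ : Fin N) (1:ℝ) with hy
    have hny : ‖y‖ = 1 := by rw [hy, EuclideanSpace.norm_single]; norm_num
    have h0mem : (0 : EuclideanSpace ℝ (Fin N)) ∈ closedBall (0 : EuclideanSpace ℝ (Fin N)) 1 :=
      mem_closedBall_self zero_le_one
    have hymem : y ∈ closedBall (0 : EuclideanSpace ℝ (Fin N)) 1 :=
      mem_closedBall_zero_iff.2 (le_of_eq hny)
    have heq := hcontr 0 h0mem y hymem
    have hu0 : u 0 = 1 - (lam / N) ^ (N - 1) * Real.exp ((N:ℝ) - lam) := by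
      simp only [u, norm_zero, if_pos hb.le]
    have huy : u y = 0 := hbd y hny
    rw [hu0, huy] at heq
    linarith
end
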